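/- arXiv:2603.06060 — 6 statements merged into one kernel-verified Lean document; each statement's English description precedes it below -/
import Mathlib

section
/- Let r ≥ 1, let x ∈ ℝ with q = f_h(x), let k = ⌊2^r·q⌋, and let R be uniformly distributed on {0, 1, …, 2^r − 1}. Then P(k + R ≥ 2^r) = k/2^r, and q − 2^{−r} < k/2^r ≤ q. Consequently the expected output of the StochasticA scheme, namely ⌊x⌋_h + h·(k/2^r), satisfies x − h·2^{−r} < ⌊x⌋_h + h·(k/2^r) ≤ x, i.e. StochasticA has a downward bias of magnitude less than h·2^{−r}. -/
open MeasureTheory ProbabilityTheory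
open scoped ENNReal

/-- Stochastic rounding to the grid `hℤ`: equal to `h·⌊x/h⌋ + h` with probability
`f_h(x) = Int.fract (x/h)` and to `h·⌊x/h⌋` with probability `1 − f_h(x)`. -/
noncomputable def srPMF (h x : ℝ) : PMF ℝ :=
  (PMF.bernoulli (Real.toNNReal (Int.fract (x / h)))
      (Real.toNNReal_le_one.mpr (Int.fract_lt_one _).le)).map
    (fun b => if b then h * ⌊x / h⌋ + h else h * ⌊x / h⌋)

/-- A uniform random `r`-bit integer `R ∈ {0, 1, …, 2^r − 1}`. -/
noncomputable def unifBits (r : ℕ) : PMF ℕ :=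
  PMF.uniformOfFinset (Finset.range (2 ^ r)) (Finset.nonempty_range_iff.mpr (by positivity))

/-- IEEE P3109 StochasticA: with `q = f_h(x)`, `k = ⌊2^r·q⌋` and `R` uniform on
`{0,…,2^r−1}`, `P(k + R ≥ 2^r) = k/2^r` and `q − 2^{−r} < k/2^r ≤ q`; hence the
expected output `⌊x⌋_h + h·(k/2^r)` satisfies `x − h·2^{−r} < ⌊x⌋_h + h·(k/2^r) ≤ x`,
i.e. StochasticA has a downward bias of magnitude less than `h·2^{−r}`. -/
theorem stochasticA_bias (h x : ℝ) (hh : 0 < h) (r : ℕ) (hr : 1 ≤ r) :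
    (unifBits r).toMeasure {R | (2 ^ r : ℤ) ≤ ⌊(2 ^ r : ℝ) * Int.fract (x / h)⌋ + (R : ℤ)}
      = ENNReal.ofReal ((⌊(2 ^ r : ℝ) * Int.fract (x / h)⌋ : ℝ) / 2 ^ r) ∧
    Int.fract (x / h) - ((2 : ℝ) ^ r)⁻¹
      < (⌊(2 ^ r : ℝ) * Int.fract (x / h)⌋ : ℝ) / 2 ^ r ∧
    (⌊(2 ^ r : ℝ) * Int.fract (x / h)⌋ : ℝ) / 2 ^ r ≤ Int.fract (x / h) ∧
    x - h * ((2 : ℝ) ^ r)⁻¹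
      < h * ⌊x / h⌋ + h * ((⌊(2 ^ r : ℝ) * Int.fract (x / h)⌋ : ℝ) / 2 ^ r) ∧
    h * ⌊x / h⌋ + h * ((⌊(2 ^ r : ℝ) * Int.fract (x / h)⌋ : ℝ) / 2 ^ r) ≤ x := by
  set q : ℝ := Int.fract (x / h) with hq
  have hq0 : 0 ≤ q := Int.fract_nonneg _
  have hq1 : q < 1 := Int.fract_lt_one _
  set k : ℤ := ⌊(2 ^ r : ℝ) * q⌋ with hkdef
  have hpow : (0 : ℝ) < 2 ^ r := by positivity
  have hinv : ((2 : ℝ) ^ r)⁻¹ * 2 ^ r = 1 := inv_mul_cancel₀ (ne_of_gt hpow)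
  have hk0 : 0 ≤ k := Int.floor_nonneg.mpr (by positivity)
  have hk2 : k < 2 ^ r := by
    apply Int.floor_lt.mpr
    push_cast
    nlinarith
  set kn : ℕ := k.toNat with hkn
  have hknk : (kn : ℤ) = k := Int.toNat_of_nonneg hk0
  have h2rz : ((2 ^ r : ℕ) : ℤ) = 2 ^ r := by push_cast; ring
  have hknle : kn ≤ 2 ^ r := by omega
  have hkle : (k : ℝ) ≤ (2 ^ r : ℝ) * q := Int.floor_le _
  have hklt : (2 ^ r : ℝ) * q < (k : ℝ) + 1 := Int.lt_floor_add_one _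
  have h2 : (k : ℝ) / 2 ^ r ≤ q := by rw [div_le_iff₀ hpow]; linarith
  have h1 : q - ((2 : ℝ) ^ r)⁻¹ < (k : ℝ) / 2 ^ r := by
    rw [sub_lt_iff_lt_add, div_add' _ _ _ (ne_of_gt hpow), lt_div_iff₀ hpow]
    nlinarith
  have hx : x = h * ⌊x / h⌋ + h * q := by
    have hxq : q = x / h - ⌊x / h⌋ := rfl
    field_simp [hxq]
    rw [hxq, add_sub_cancel]; field_simp
  refine ⟨?_, h1, h2, by nlinarith, by nlinarith⟩
  have hmeas : MeasurableSet {R : ℕ | (2 ^ r : ℤ) ≤ k + (R : ℤ)} := by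
    exact MeasurableSet.of_discrete
  rw [unifBits, PMF.toMeasure_uniformOfFinset_apply _ _ hmeas]
  have hcond : ∀ a ∈ Finset.range (2 ^ r),
      (a ∈ {R : ℕ | (2 ^ r : ℤ) ≤ k + (R : ℤ)}) ↔ (2 ^ r - kn ≤ a) := by
    intro a _
    simp only [Set.mem_setOf_eq]
    rw [← hknk]
    constructor
    · intro ha
      have : ((2 ^ r - kn : ℕ) : ℤ) ≤ (a : ℤ) := by push_cast; omega
      exact_mod_cast this
    · intro ha
      have : ((2 ^ r - kn : ℕ) : ℤ) ≤ (a : ℤ) := by exact_mod_cast ha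
      push_cast at this
      omega
  rw [Finset.filter_congr_decidable, Finset.filter_congr hcond]
  have hsetfilter : (Finset.range (2 ^ r)).filter (fun a => 2 ^ r - kn ≤ a)
      = Finset.Ico (2 ^ r - kn) (2 ^ r) := by
    ext a
    simp only [Finset.mem_filter, Finset.mem_range, Finset.mem_Ico]
    omega
  rw [hsetfilter, Nat.card_Ico, Finset.card_range,
    show 2 ^ r - (2 ^ r - kn) = kn by omega]
  have hkr : ((k : ℝ) / 2 ^ r) = (kn : ℝ) / 2 ^ r := by rw [← hknk]; push_cast; ring
  rw [hkr, ENNReal.ofReal_div_of_pos hpow, ENNReal.ofReal_natCast,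
    show ((2 : ℝ) ^ r) = ((2 ^ r : ℕ) : ℝ) by push_cast; ring, ENNReal.ofReal_natCast]
end

section
/- Let r ≥ 1, let x ∈ ℝ with q = f_h(x), let k be a nearest integer to 2^r·q (so |k − 2^r·q| ≤ 1/2), and let R be uniformly distributed on {0, 1, …, 2^r − 1}. Then the probability that the StochasticC scheme rounds up equals min(k/2^r, 1) and satisfies |k/2^r − q| ≤ 2^{−(r+1)}; consequently the expected output differs from x by at most h·2^{−(r+1)}, i.e. StochasticC's worst-case bias is at most half that of StochasticA. -/
open MeasureTheory ProbabilityTheory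
open scoped ENNReal

/-- IEEE P3109 StochasticC: with `q = f_h(x)`, `k` a nearest integer to `2^r·q`
(so `|k − 2^r·q| ≤ 1/2`) and `R` uniform on `{0,…,2^r−1}`, the probability of
rounding up equals `min(k/2^r, 1)` and `|k/2^r − q| ≤ 2^{−(r+1)}`; consequently
the expected output `⌊x⌋_h + h·min(k/2^r, 1)` differs from `x` by at most
`h·2^{−(r+1)}`, half the worst-case bias of StochasticA. -/
theorem stochasticC_bias (h x : ℝ) (hh : 0 < h) (r : ℕ) (hr : 1 ≤ r) (k : ℤ)
    (hk : |(k : ℝ) - 2 ^ r * Int.fract (x / h)| ≤ 1 / 2) :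
    (unifBits r).toMeasure {R | (2 ^ r : ℤ) ≤ k + (R : ℤ)}
      = ENNReal.ofReal (min ((k : ℝ) / 2 ^ r) 1) ∧
    |(k : ℝ) / 2 ^ r - Int.fract (x / h)| ≤ ((2 : ℝ) ^ (r + 1))⁻¹ ∧
    |h * ⌊x / h⌋ + h * min ((k : ℝ) / 2 ^ r) 1 - x| ≤ h * ((2 : ℝ) ^ (r + 1))⁻¹ := by
  set q : ℝ := Int.fract (x / h) with hq
  have hq0 : 0 ≤ q := Int.fract_nonneg _
  have hq1 : q < 1 := Int.fract_lt_one _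
  have h2r : (0 : ℝ) < 2 ^ r := by positivity
  obtain ⟨hk1, hk2⟩ := abs_le.mp hk
  -- k bounds
  have hk0 : 0 ≤ k := by
    have h1 : (-1 : ℝ) < k := by nlinarith
    have : (-1 : ℤ) < k := by exact_mod_cast h1
    omega
  have hkle : k ≤ 2 ^ r := by
    have : (k : ℝ) < 2 ^ r + 1 := by nlinarith
    have := Int.lt_iff_add_one_le.mp (show k < (2:ℤ)^r + 1 by exact_mod_cast this)
    omega
  have hkdiv : (k : ℝ) / 2 ^ r ≤ 1 := by
    rw [div_le_one h2r]; exact_mod_cast hkle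
  have hmin : min ((k : ℝ) / 2 ^ r) 1 = (k : ℝ) / 2 ^ r := min_eq_left hkdiv
  have hb : |(k : ℝ) / 2 ^ r - q| ≤ ((2 : ℝ) ^ (r + 1))⁻¹ := by
    have e : (k : ℝ) / 2 ^ r - q = ((k : ℝ) - 2 ^ r * q) / 2 ^ r := by field_simp
    have e2 : ((2 : ℝ) ^ (r + 1))⁻¹ = (1 / 2) / 2 ^ r := by
      rw [pow_succ]; field_simp
    rw [e, abs_div, abs_of_pos h2r, e2]
    gcongr
  refine ⟨?_, hb, ?_⟩
  · -- measure part
    have hms : MeasurableSet {R : ℕ | (2 ^ r : ℤ) ≤ k + (R : ℤ)} := trivial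
    simp only [unifBits]
    rw [PMF.toMeasure_uniformOfFinset_apply _ _ hms]
    have hkt : (k.toNat : ℤ) = k := Int.toNat_of_nonneg hk0
    have hktle : k.toNat ≤ 2 ^ r := by
      have : ((2:ℤ) ^ r) = ((2 ^ r : ℕ) : ℤ) := by push_cast; ring
      omega
    have hfilter : ∀ (D : DecidablePred (· ∈ {R : ℕ | (2 ^ r : ℤ) ≤ k + (R : ℤ)})),
        (@Finset.filter _ _ D (Finset.range (2 ^ r))).card = k.toNat := by
      intro D
      have hp : ((2 ^ r : ℕ) : ℤ) = 2 ^ r := by push_cast; ring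
      have he : (@Finset.filter _ _ D (Finset.range (2 ^ r)))
          = Finset.Ico (2 ^ r - k.toNat) (2 ^ r) := by
        ext R
        simp only [Finset.mem_filter, Finset.mem_range, Set.mem_setOf_eq, Finset.mem_Ico]
        rw [← hkt, ← hp]
        omega
      rw [he, Nat.card_Ico]
      omega
    rw [hfilter _, Finset.card_range, hmin]
    rw [ENNReal.ofReal_div_of_pos h2r]
    have h1 : ENNReal.ofReal ((k : ℝ)) = (k.toNat : ℝ≥0∞) := by
      rw [show ((k : ℝ)) = ((k.toNat : ℕ) : ℝ) by exact_mod_cast hkt.symm,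
        ENNReal.ofReal_natCast]
    have h2 : ENNReal.ofReal ((2 : ℝ) ^ r) = ((2 ^ r : ℕ) : ℝ≥0∞) := by
      push_cast; rw [ENNReal.ofReal_pow (by norm_num)]; norm_num
    rw [h1, h2]
  · -- bias part
    have hx : h * q = x - h * ⌊x / h⌋ := by
      rw [hq, Int.fract, mul_sub, mul_div_cancel₀ _ (ne_of_gt hh)]
    rw [hmin]
    have : h * ⌊x / h⌋ + h * ((k : ℝ) / 2 ^ r) - x = h * ((k : ℝ) / 2 ^ r - q) := by
      rw [mul_sub, hx]; ring
    rw [this, abs_mul, abs_of_pos hh]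
    exact mul_le_mul_of_nonneg_left hb hh.le
end

section
/- Let h > 0, let x_1, …, x_n be real numbers rounded element-wise by independent stochastic roundings, and let S = Σ_{i=1}^n SR_h(x_i). Then for every t > 0, P(|S − Σ_{i=1}^n x_i| ≥ t) ≤ n·h²/(4t²); in particular, for every δ ∈ (0,1), with probability at least 1 − δ the total rounding error satisfies |S − Σ x_i| ≤ (h/2)·√(n/δ), i.e. it grows like √n rather than n. -/
open MeasureTheory ProbabilityTheory
open scoped ENNReal

namespace SRaux

lemma g_meas (h x : ℝ) :
    Measurable (fun b : Bool => if b then h * ⌊x / h⌋ + h else h * (⌊x / h⌋ : ℤ)) :=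
  measurable_of_countable _

lemma srPMF_toMeasure (h x : ℝ) :
    (srPMF h x).toMeasure =
      (PMF.bernoulli (Real.toNNReal (Int.fract (x / h)))
        (Real.toNNReal_le_one.mpr (Int.fract_lt_one _).le)).toMeasure.map
        (fun b : Bool => if b then h * ⌊x / h⌋ + h else h * ⌊x / h⌋) :=
  (PMF.toMeasure_map _ _ (g_meas h x)).symm

lemma coeff_false (h x : ℝ) :
    (((1 : NNReal) - Real.toNNReal (Int.fract (x / h)) : NNReal) : ℝ) = 1 - Int.fract (x / h) := by
  rw [NNReal.coe_sub (Real.toNNReal_le_one.mpr (Int.fract_lt_one _).le), NNReal.coe_one,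
    Real.coe_toNNReal _ (Int.fract_nonneg _)]

lemma srPMF_integral (h x : ℝ) (φ : ℝ → ℝ) (hφ : Measurable φ) :
    ∫ y, φ y ∂(srPMF h x).toMeasure
      = (1 - Int.fract (x / h)) * φ (h * ⌊x / h⌋)
        + Int.fract (x / h) * φ (h * ⌊x / h⌋ + h) := by
  rw [srPMF_toMeasure, integral_map (g_meas h x).aemeasurable hφ.aestronglyMeasurable,
    PMF.integral_eq_sum]
  simp [Fintype.sum_bool, PMF.bernoulli_apply, coeff_false h x,
    Real.coe_toNNReal _ (Int.fract_nonneg (x / h)), smul_eq_mul]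
  ring

lemma srPMF_memℒp (h x : ℝ) : MemLp (id : ℝ → ℝ) 2 (srPMF h x).toMeasure := by
  rw [srPMF_toMeasure]
  rw [memLp_map_measure_iff measurable_id.aestronglyMeasurable (g_meas h x).aemeasurable]
  refine memLp_of_bounded (a := min (h * ⌊x / h⌋) (h * ⌊x / h⌋ + h))
    (b := max (h * ⌊x / h⌋) (h * ⌊x / h⌋ + h))
    (Filter.Eventually.of_forall fun b => ?_) (g_meas h x).aestronglyMeasurable _
  cases b
  · exact Set.mem_Icc.mpr ⟨min_le_left _ _, le_max_left _ _⟩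
  · exact Set.mem_Icc.mpr ⟨min_le_right _ _, le_max_right _ _⟩

end SRaux

/-- Bienaymé–Chebyshev bound for element-wise independent stochastic rounding:
`P(|S − Σ x_i| ≥ t) ≤ n·h²/(4t²)` for every `t > 0`; in particular, for
`δ ∈ (0,1)`, with probability at least `1 − δ`, `|S − Σ x_i| ≤ (h/2)·√(n/δ)`. -/
theorem sr_sum_chebyshev (h : ℝ) (hh : 0 < h) (n : ℕ) (x : Fin n → ℝ) :
    (∀ t : ℝ, 0 < t →
      (Measure.pi fun i => (srPMF h (x i)).toMeasure)
          {ω | t ≤ |(∑ i, ω i) - ∑ i, x i|}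
        ≤ ENNReal.ofReal (n * h ^ 2 / (4 * t ^ 2))) ∧
    ∀ δ : ℝ, δ ∈ Set.Ioo (0 : ℝ) 1 →
      ENNReal.ofReal (1 - δ) ≤
        (Measure.pi fun i => (srPMF h (x i)).toMeasure)
          {ω | |(∑ i, ω i) - ∑ i, x i| ≤ h / 2 * Real.sqrt (n / δ)} := by
  classical
  set νi : Fin n → Measure ℝ := fun i => (srPMF h (x i)).toMeasure with hνi
  haveI : ∀ i, IsProbabilityMeasure (νi i) := fun i => PMF.toMeasure.isProbabilityMeasure _
  set μ : Measure (Fin n → ℝ) := Measure.pi νi with hμ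
  haveI : IsProbabilityMeasure μ := Measure.pi.instIsProbabilityMeasure _
  set X : Fin n → (Fin n → ℝ) → ℝ := fun i ω => ω i with hX
  -- law of each coordinate
  have hmap : ∀ i, Measure.map (X i) μ = νi i := by
    intro i
    refine Measure.ext fun s hs => ?_
    rw [Measure.map_apply (measurable_pi_apply i) hs]
    have : (X i) ⁻¹' s = Set.pi Set.univ (Function.update (fun _ => Set.univ) i s) := by
      ext ω
      simp [Function.update_apply, hX]
    rw [this, Measure.pi_pi]
    have hprod : ∀ k : Fin n, νi k (Function.update (fun _ => Set.univ) i s k)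
        = if k = i then νi i s else 1 := by
      intro k; rcases eq_or_ne k i with rfl | hk
      · simp
      · simp [Function.update_apply, hk]
    simp_rw [hprod]
    simp
  -- Memℒp
  have hmem : ∀ i, MemLp (X i) 2 μ := by
    intro i
    have h0 : MemLp (id : ℝ → ℝ) 2 (Measure.map (X i) μ) := by
      rw [hmap i]; exact SRaux.srPMF_memℒp h (x i)
    exact (memLp_map_measure_iff measurable_id.aestronglyMeasurable
      (measurable_pi_apply i).aemeasurable).mp h0
  -- moments
  have hint : ∀ i (φ : ℝ → ℝ), Measurable φ →
      ∫ ω, φ (X i ω) ∂μ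
        = (1 - Int.fract (x i / h)) * φ (h * ⌊x i / h⌋)
          + Int.fract (x i / h) * φ (h * ⌊x i / h⌋ + h) := by
    intro i φ hφ
    rw [← integral_map (measurable_pi_apply i).aemeasurable hφ.aestronglyMeasurable]
    rw [hmap i]
    exact SRaux.srPMF_integral h (x i) φ hφ
  have hmean : ∀ i, μ[X i] = x i := by
    intro i
    have := hint i id measurable_id
    simp only [id] at this
    rw [this]
    have hfr : Int.fract (x i / h) = x i / h - ⌊x i / h⌋ := rfl
    field_simp [hfr]
    have hx : h * (x i / h) = x i := by field_simp [hh.ne']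
    rw [hfr]
    linear_combination hx
  have hvar : ∀ i, variance (X i) μ ≤ h ^ 2 / 4 := by
    intro i
    rw [variance_eq_sub (hmem i)]
    have h2 : μ[X i ^ 2] = (1 - Int.fract (x i / h)) * (h * ⌊x i / h⌋) ^ 2
        + Int.fract (x i / h) * (h * ⌊x i / h⌋ + h) ^ 2 := by
      have := hint i (fun y => y ^ 2) (measurable_id.pow_const 2)
      simpa [Pi.pow_apply] using this
    have h1 : μ[X i] = (1 - Int.fract (x i / h)) * (h * ⌊x i / h⌋)
        + Int.fract (x i / h) * (h * ⌊x i / h⌋ + h) := by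
      have := hint i id measurable_id
      simpa [id] using this
    rw [h2, h1]
    nlinarith [Int.fract_nonneg (x i / h), Int.fract_lt_one (x i / h),
      sq_nonneg (h * (1 - 2 * Int.fract (x i / h))), sq_nonneg h]
  -- independence of coordinates
  have hindep : ∀ i j, i ≠ j → IndepFun (X i) (X j) μ := by
    intro i j hij
    rw [indepFun_iff_measure_inter_preimage_eq_mul]
    intro s t hs ht
    have hps : μ ((X i) ⁻¹' s) = νi i s := by
      rw [← Measure.map_apply (measurable_pi_apply i) hs, hmap i]
    have hpt : μ ((X j) ⁻¹' t) = νi j t := by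
      rw [← Measure.map_apply (measurable_pi_apply j) ht, hmap j]
    have hset : (X i) ⁻¹' s ∩ (X j) ⁻¹' t
        = Set.pi Set.univ (fun k => if k = i then s else if k = j then t else Set.univ) := by
      ext ω
      simp only [Set.mem_inter_iff, Set.mem_preimage, Set.mem_univ_pi]
      constructor
      · rintro ⟨h1, h2⟩ k
        split_ifs with e1 e2
        · exact e1 ▸ h1
        · exact e2 ▸ h2
        · trivial
      · intro hω
        have h1 := hω i
        have h2 := hω j
        rw [if_pos rfl] at h1
        rw [if_neg (Ne.symm hij), if_pos rfl] at h2
        exact ⟨h1, h2⟩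
    rw [hset, Measure.pi_pi, hps, hpt]
    have : ∀ k, νi k (if k = i then s else if k = j then t else Set.univ)
        = (if k = i then νi i s else 1) * (if k = j then νi j t else 1) := by
      intro k
      split_ifs with e1 e2 <;> simp_all
    simp_rw [this]
    rw [Finset.prod_mul_distrib, Finset.prod_ite_eq' Finset.univ i (fun _ => νi i s),
      Finset.prod_ite_eq' Finset.univ j (fun _ => νi j t)]
    simp
  -- sum
  have hS : MemLp (∑ i, X i) 2 μ := memLp_finset_sum' _ fun i _ => hmem i
  have hSapp : ∀ ω, (∑ i, X i) ω = ∑ i, ω i := by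
    intro ω; simp [Finset.sum_apply, hX]
  have hSmean : μ[∑ i, X i] = ∑ i, x i := by
    simp_rw [funext hSapp]
    rw [integral_finset_sum _ fun i _ => ?_]
    · exact Finset.sum_congr rfl fun i _ => hmean i
    · exact (hmem i).integrable one_le_two
  have hSvar : variance (∑ i, X i) μ ≤ n * h ^ 2 / 4 := by
    rw [IndepFun.variance_sum (fun i _ => hmem i)
      (fun i _ j _ hij => hindep i j hij)]
    calc ∑ i, variance (X i) μ ≤ ∑ _i : Fin n, h ^ 2 / 4 :=
          Finset.sum_le_sum fun i _ => hvar i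
      _ = n * h ^ 2 / 4 := by simp [Finset.sum_const]; ring
  have part1 : ∀ t : ℝ, 0 < t →
      μ {ω | t ≤ |(∑ i, ω i) - ∑ i, x i|} ≤ ENNReal.ofReal (n * h ^ 2 / (4 * t ^ 2)) := by
    intro t ht
    have hcheb := meas_ge_le_variance_div_sq (μ := μ) hS ht
    have hsetq : {ω | t ≤ |(∑ i, X i) ω - μ[∑ i, X i]|}
        = {ω : Fin n → ℝ | t ≤ |(∑ i, ω i) - ∑ i, x i|} := by
      ext ω; rw [Set.mem_setOf_eq, Set.mem_setOf_eq, hSapp, hSmean]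
    rw [hsetq] at hcheb
    refine hcheb.trans (ENNReal.ofReal_le_ofReal ?_)
    rw [div_le_div_iff₀ (by positivity) (by positivity)]
    nlinarith [sq_nonneg t, hSvar, sq_nonneg h]
  refine ⟨part1, ?_⟩
  intro δ hδ
  obtain ⟨hδ0, hδ1⟩ := hδ
  rcases Nat.eq_zero_or_pos n with hn | hn
  · subst hn
    have huniv : {ω : Fin 0 → ℝ | |(∑ i, ω i) - ∑ i, x i| ≤ h / 2 * Real.sqrt (((0:ℕ):ℝ) / δ)}
        = Set.univ := by
      ext ω; simp
    rw [huniv, measure_univ]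
    exact ENNReal.ofReal_le_one.mpr (by linarith)
  · set t : ℝ := h / 2 * Real.sqrt (n / δ) with htdef
    have hnpos : (0 : ℝ) < n := by exact_mod_cast hn
    have ht : 0 < t := by
      apply mul_pos (by positivity)
      exact Real.sqrt_pos.mpr (div_pos hnpos hδ0)
    have ht2 : (n : ℝ) * h ^ 2 / (4 * t ^ 2) = δ := by
      have hsq : Real.sqrt ((n : ℝ) / δ) ^ 2 = n / δ :=
        Real.sq_sqrt (le_of_lt (div_pos hnpos hδ0))
      rw [htdef, mul_pow, hsq]
      field_simp
      ring
    have hmeasS : MeasurableSet {ω : Fin n → ℝ | t ≤ |(∑ i, ω i) - ∑ i, x i|} := by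
      apply measurableSet_le measurable_const
      exact ((Finset.measurable_sum Finset.univ fun i _ =>
        measurable_pi_apply i).sub measurable_const).abs
    have hb := part1 t ht
    rw [ht2] at hb
    calc ENNReal.ofReal (1 - δ) = 1 - ENNReal.ofReal δ := by
          rw [← ENNReal.ofReal_one, ← ENNReal.ofReal_sub _ hδ0.le]
      _ ≤ 1 - μ {ω | t ≤ |(∑ i, ω i) - ∑ i, x i|} := tsub_le_tsub_left hb 1
      _ = μ {ω : Fin n → ℝ | t ≤ |(∑ i, ω i) - ∑ i, x i|}ᶜ :=
          (prob_compl_eq_one_sub hmeasS).symm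
      _ ≤ μ {ω | |(∑ i, ω i) - ∑ i, x i| ≤ t} := by
          apply measure_mono
          intro ω hω
          simp only [Set.mem_compl_iff, Set.mem_setOf_eq, not_le] at hω
          exact hω.le
end

section
/- Let h > 0, let x_1, …, x_n be real numbers rounded element-wise by independent stochastic roundings, and let ε_i = SR_h(x_i) − x_i. Each ε_i has mean zero and lies almost surely in the interval [⌊x_i⌋_h − x_i, ⌊x_i⌋_h + h − x_i] of length h; therefore, by Hoeffding's inequality, for every t > 0, P(|Σ_{i=1}^n ε_i| ≥ t) ≤ 2·exp(−2t²/(n·h²)). -/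
open MeasureTheory ProbabilityTheory
open scoped ENNReal

lemma bernoulli_mgf_le' (p : ℝ) (hp0 : 0 ≤ p) (hp1 : p ≤ 1) (u : ℝ) :
    p * Real.exp ((1 - p) * u) + (1 - p) * Real.exp (-(p * u)) ≤ Real.exp (u ^ 2 / 8) := by
  set D : ℝ → ℝ := fun v => 1 - p + p * Real.exp v with hDdef
  have hDpos : ∀ v, 0 < D v := by
    intro v
    rcases hp0.eq_or_lt with hp | hp
    · simp [hDdef, ← hp]
    · have := Real.exp_pos v
      simp only [hDdef]
      nlinarith [mul_pos hp this]
  have hDderiv : ∀ v, HasDerivAt D (p * Real.exp v) v := fun v =>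
    ((Real.hasDerivAt_exp v).const_mul p).const_add (1 - p)
  set G : ℝ → ℝ := fun v => v / 4 + p - p * Real.exp v / D v with hGdef
  have hGderiv : ∀ v, HasDerivAt G
      (1 / 4 - (p * Real.exp v * D v - p * Real.exp v * (p * Real.exp v)) / (D v) ^ 2) v := by
    intro v
    have h1 : HasDerivAt (fun w : ℝ => w / 4 + p) (1 / 4) v := by
      simpa using ((hasDerivAt_id v).div_const 4).add_const p
    have h2 : HasDerivAt (fun w => p * Real.exp w) (p * Real.exp v) v :=
      (Real.hasDerivAt_exp v).const_mul p
    have h3 := h2.div (hDderiv v) (hDpos v).ne'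
    exact h1.sub h3
  have hGd_nonneg : ∀ v,
      0 ≤ 1 / 4 - (p * Real.exp v * D v - p * Real.exp v * (p * Real.exp v)) / (D v) ^ 2 := by
    intro v
    have hd := hDpos v
    have ha : 0 ≤ p * Real.exp v := mul_nonneg hp0 (Real.exp_pos v).le
    have hle : p * Real.exp v ≤ D v := by simp only [hDdef]; nlinarith
    rw [sub_nonneg, div_le_iff₀ (by positivity)]
    have e1 : p * Real.exp v * D v - p * Real.exp v * (p * Real.exp v)
        = (p * Real.exp v) * (D v - p * Real.exp v) := by ring
    rw [e1]
    obtain ⟨d, hd'⟩ : ∃ d, D v = d := ⟨_, rfl⟩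
    obtain ⟨a, ha'⟩ : ∃ a, p * Real.exp v = a := ⟨_, rfl⟩
    rw [hd', ha'] at *
    nlinarith [sq_nonneg (d - 2 * a)]
  have hGmono : Monotone G := by
    refine monotone_of_deriv_nonneg (fun v => (hGderiv v).differentiableAt) ?_
    intro v
    rw [(hGderiv v).deriv]
    exact hGd_nonneg v
  have hG0 : G 0 = 0 := by
    simp [hGdef, hDdef]
  set F : ℝ → ℝ := fun v => v ^ 2 / 8 + p * v - Real.log (D v) with hFdef
  have hFderiv : ∀ v, HasDerivAt F (G v) v := by
    intro v
    have h1 : HasDerivAt (fun w : ℝ => w ^ 2 / 8 + p * w) (v / 4 + p) v := by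
      have := ((hasDerivAt_pow 2 v).div_const 8).add ((hasDerivAt_id v).const_mul p)
      exact this.congr_deriv (by ring)
    have h2 : HasDerivAt (fun w => Real.log (D w)) (p * Real.exp v / D v) v :=
      (hDderiv v).log (hDpos v).ne'
    exact h1.sub h2
  have hF0 : F 0 = 0 := by simp [hFdef, hDdef]
  have hFdiff : Differentiable ℝ F := fun s => (hFderiv s).differentiableAt
  have hFnonneg : ∀ v, 0 ≤ F v := by
    intro v
    rcases le_total 0 v with hv | hv
    · have hmono : MonotoneOn F (Set.Ici (0:ℝ)) := by
        refine monotoneOn_of_deriv_nonneg (convex_Ici 0) hFdiff.continuous.continuousOn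
          (fun s _ => (hFdiff s).differentiableWithinAt) ?_
        intro s hs
        rw [interior_Ici] at hs
        rw [(hFderiv s).deriv]
        calc (0:ℝ) = G 0 := hG0.symm
        _ ≤ G s := hGmono hs.le
      have := hmono Set.self_mem_Ici hv hv
      simpa [hF0] using this
    · have hanti : AntitoneOn F (Set.Iic (0:ℝ)) := by
        refine antitoneOn_of_deriv_nonpos (convex_Iic 0) hFdiff.continuous.continuousOn
          (fun s _ => (hFdiff s).differentiableWithinAt) ?_
        intro s hs
        rw [interior_Iic] at hs
        rw [(hFderiv s).deriv]
        calc G s ≤ G 0 := hGmono hs.le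
        _ = 0 := hG0
      have := hanti hv Set.self_mem_Iic hv
      simpa [hF0] using this
  have key : Real.log (D u) - p * u ≤ u ^ 2 / 8 := by
    have := hFnonneg u
    simp only [hFdef] at this
    linarith
  have hrw : p * Real.exp ((1 - p) * u) + (1 - p) * Real.exp (-(p * u))
      = Real.exp (Real.log (D u) - p * u) := by
    rw [Real.exp_sub, Real.exp_log (hDpos u)]
    simp only [hDdef]
    rw [sub_mul, one_mul, Real.exp_sub, Real.exp_neg]
    field_simp
    ring
  rw [hrw]
  exact Real.exp_le_exp.mpr key

lemma bernoulli_toMeasure' (p : NNReal) (hp : p ≤ 1) :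
    (PMF.bernoulli p hp).toMeasure
      = (p : ℝ≥0∞) • Measure.dirac true + (1 - (p : ℝ≥0∞)) • Measure.dirac false := by
  ext s hs
  rw [PMF.toMeasure_apply_fintype _ s]
  rw [Measure.add_apply, Measure.smul_apply, Measure.smul_apply,
    Measure.dirac_apply' _ hs, Measure.dirac_apply' _ hs]
  simp only [Fintype.sum_bool, PMF.bernoulli_apply, Set.indicator, smul_eq_mul]
  by_cases ht : true ∈ s <;> by_cases hf : false ∈ s <;> simp [ht, hf, ENNReal.coe_sub]

lemma integral_two_dirac' (a b p : ℝ) (hp0 : 0 ≤ p) (hp1 : p ≤ 1) (g : ℝ → ℝ) :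
    ∫ y, g y ∂(ENNReal.ofReal p • Measure.dirac a + ENNReal.ofReal (1 - p) • Measure.dirac b)
      = p * g a + (1 - p) * g b := by
  have hia : Integrable g (Measure.dirac a) :=
    (integrable_const (g a)).congr ((ae_eq_dirac g).symm)
  have hib : Integrable g (Measure.dirac b) :=
    (integrable_const (g b)).congr ((ae_eq_dirac g).symm)
  rw [integral_add_measure (hia.smul_measure ENNReal.ofReal_ne_top)
      (hib.smul_measure ENNReal.ofReal_ne_top),
    integral_smul_measure, integral_smul_measure, integral_dirac, integral_dirac,
    ENNReal.toReal_ofReal hp0, ENNReal.toReal_ofReal (by linarith)]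
  simp [smul_eq_mul]

lemma integrable_two_dirac' (a b : ℝ) (p q : ℝ≥0∞) (hp : p ≠ ∞) (hq : q ≠ ∞) (g : ℝ → ℝ) :
    Integrable g (p • Measure.dirac a + q • Measure.dirac b) := by
  have hia : Integrable g (Measure.dirac a) :=
    (integrable_const (g a)).congr ((ae_eq_dirac g).symm)
  have hib : Integrable g (Measure.dirac b) :=
    (integrable_const (g b)).congr ((ae_eq_dirac g).symm)
  exact (hia.smul_measure hp).add_measure (hib.smul_measure hq)

lemma srPMF_toMeasure' (h x : ℝ) :
    (srPMF h x).toMeasure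
      = ENNReal.ofReal (Int.fract (x / h)) • Measure.dirac (h * ⌊x / h⌋ + h)
        + ENNReal.ofReal (1 - Int.fract (x / h)) • Measure.dirac (h * ⌊x / h⌋) := by
  have hmeas : Measurable (fun b : Bool => if b then h * ⌊x / h⌋ + h else h * ⌊x / h⌋) :=
    measurable_from_top
  rw [srPMF, ← PMF.toMeasure_map _ _ hmeas, bernoulli_toMeasure']
  rw [Measure.map_add _ _ hmeas, Measure.map_smul, Measure.map_smul,
    Measure.map_dirac' hmeas, Measure.map_dirac' hmeas]
  have : (1 : ℝ≥0∞) - ((Int.fract (x / h)).toNNReal : ℝ≥0∞)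
      = ENNReal.ofReal (1 - Int.fract (x / h)) := by
    rw [ENNReal.ofReal_sub _ (Int.fract_nonneg _), ENNReal.ofReal_one]
    rfl
  simp [this]
  rfl

/-- Hoeffding bound for element-wise independent stochastic rounding: the errors
`ε_i = SR_h(x_i) − x_i` have mean zero, lie almost surely in the length-`h`
interval `[⌊x_i⌋_h − x_i, ⌊x_i⌋_h + h − x_i]`, and for every `t > 0`,
`P(|Σ ε_i| ≥ t) ≤ 2·exp(−2t²/(n·h²))`. -/
theorem sr_sum_hoeffding (h : ℝ) (hh : 0 < h) (n : ℕ) (x : Fin n → ℝ) :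
    (∀ i, (∫ ω, (ω i - x i) ∂(Measure.pi fun j => (srPMF h (x j)).toMeasure)) = 0) ∧
    (∀ i, (Measure.pi fun j => (srPMF h (x j)).toMeasure)
        {ω | ω i - x i ∈ Set.Icc (h * ⌊x i / h⌋ - x i) (h * ⌊x i / h⌋ + h - x i)} = 1) ∧
    ∀ t : ℝ, 0 < t →
      (Measure.pi fun j => (srPMF h (x j)).toMeasure)
          {ω | t ≤ |∑ i, (ω i - x i)|}
        ≤ ENNReal.ofReal (2 * Real.exp (-2 * t ^ 2 / (n * h ^ 2))) := by

  classical
  set A : Fin n → ℝ := fun i => h * ⌊x i / h⌋ with hA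
  set f : Fin n → ℝ := fun i => Int.fract (x i / h) with hfdef
  set ν : Fin n → Measure ℝ := fun j => (srPMF h (x j)).toMeasure with hν
  have hνeq : ∀ j, ν j = ENNReal.ofReal (f j) • Measure.dirac (A j + h)
      + ENNReal.ofReal (1 - f j) • Measure.dirac (A j) := fun j => srPMF_toMeasure' h (x j)
  have hf0 : ∀ i, 0 ≤ f i := fun i => Int.fract_nonneg _
  have hf1 : ∀ i, f i ≤ 1 := fun i => (Int.fract_lt_one _).le
  have hx : ∀ i, x i = A i + h * f i := by
    intro i
    simp only [hA, hfdef, Int.fract]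
    field_simp
    ring
  haveI hprob : ∀ j, IsProbabilityMeasure (ν j) := fun j => PMF.toMeasure.isProbabilityMeasure _
  haveI : IsProbabilityMeasure (Measure.pi ν) := inferInstance
  -- Fubini for the product measure
  have hprod : ∀ g : Fin n → ℝ → ℝ,
      (∫ ω : Fin n → ℝ, ∏ j, g j (ω j) ∂Measure.pi ν) = ∏ j, ∫ y, g j y ∂ν j := by
    intro g
    exact MeasureTheory.integral_fin_nat_prod_eq_prod (μ := ν) g
  -- integrability of coordinate-wise products
  have hintprod : ∀ g : Fin n → ℝ → ℝ, (∀ j, Integrable (g j) (ν j)) →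
      Integrable (fun ω : Fin n → ℝ => ∏ j, g j (ω j)) (Measure.pi ν) := by
    intro g hg
    exact MeasureTheory.Integrable.fintype_prod_dep (μ := ν) (f := g) hg
  -- coordinate integrals
  have hcoord : ∀ j (g : ℝ → ℝ),
      (∫ y, g y ∂ν j) = f j * g (A j + h) + (1 - f j) * g (A j) := by
    intro j g
    rw [hνeq j]
    exact integral_two_dirac' _ _ _ (hf0 j) (hf1 j) g
  have hcoordInt : ∀ j (g : ℝ → ℝ), Integrable g (ν j) := by
    intro j g
    rw [hνeq j]
    exact integrable_two_dirac' _ _ _ _ ENNReal.ofReal_ne_top ENNReal.ofReal_ne_top g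
  refine ⟨?_, ?_, ?_⟩
  · -- mean zero
    intro i
    have h1 : (fun ω : Fin n → ℝ => ω i - x i)
        = fun ω => ∏ j, (if j = i then ω j - x j else 1) := by
      funext ω
      rw [Finset.prod_ite_eq' Finset.univ i (fun j => ω j - x j)]
      simp
    rw [h1]
    have h2 := hprod (fun j y => if j = i then y - x j else 1)
    rw [h2]
    refine Finset.prod_eq_zero (Finset.mem_univ i) ?_
    have : (fun y : ℝ => if i = i then y - x i else 1) = fun y => y - x i := by simp
    rw [this, hcoord i]
    rw [hx i]
    ring
  · -- almost sure interval
    intro i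
    have hset : {ω : Fin n → ℝ | ω i - x i ∈ Set.Icc (h * ⌊x i / h⌋ - x i) (h * ⌊x i / h⌋ + h - x i)}
        = (fun ω : Fin n → ℝ => ω i) ⁻¹' Set.Icc (A i) (A i + h) := by
      ext ω
      simp only [Set.mem_setOf_eq, Set.mem_Icc, Set.mem_preimage, hA]
      constructor
      · rintro ⟨h1, h2⟩; constructor <;> linarith
      · rintro ⟨h1, h2⟩; constructor <;> linarith
    rw [hset]
    have hmeas : MeasurableSet ((fun ω : Fin n → ℝ => ω i) ⁻¹' Set.Icc (A i) (A i + h)) :=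
      (measurableSet_Icc).preimage (measurable_pi_apply i)
    rw [← prob_compl_eq_zero_iff hmeas]
    have hc : ((fun ω : Fin n → ℝ => ω i) ⁻¹' Set.Icc (A i) (A i + h))ᶜ
        = (fun ω : Fin n → ℝ => ω i) ⁻¹' (Set.Icc (A i) (A i + h))ᶜ := rfl
    rw [hc]
    refine Measure.pi_eval_preimage_null _ ?_
    rw [hνeq i]
    have h1 : A i + h ∈ Set.Icc (A i) (A i + h) := ⟨by linarith, le_rfl⟩
    have h2 : A i ∈ Set.Icc (A i) (A i + h) := ⟨le_rfl, by linarith⟩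
    have hd1 : Measure.dirac (A i + h) (Set.Icc (A i) (A i + h))ᶜ = 0 := by
      rw [Measure.dirac_apply]
      exact Set.indicator_of_notMem (by simpa using h1) _
    have hd2 : Measure.dirac (A i) (Set.Icc (A i) (A i + h))ᶜ = 0 := by
      rw [Measure.dirac_apply]
      exact Set.indicator_of_notMem (by simpa using h2) _
    simp [Measure.add_apply, Measure.smul_apply, hd1, hd2]
  · -- Hoeffding tail bound
    intro t ht
    rcases Nat.eq_zero_or_pos n with hn | hn
    · subst hn
      have : ((0:ℕ) : ℝ) * h ^ 2 = 0 := by norm_num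
      rw [Nat.cast_zero, zero_mul, div_zero, Real.exp_zero, mul_one]
      calc (Measure.pi ν) {ω | t ≤ |∑ i, (ω i - x i)|} ≤ 1 := prob_le_one
      _ ≤ ENNReal.ofReal 2 := by
          rw [show ((2:ℝ)) = ((2:ℕ):ℝ) by norm_num, ENNReal.ofReal_natCast]
          exact one_le_two
    have hN : (0:ℝ) < (n:ℝ) := by exact_mod_cast hn
    set N : ℝ := (n : ℝ) with hNdef
    have hNh : N * h ^ 2 ≠ 0 := by positivity
    set s0 : ℝ := 4 * t / (N * h ^ 2) with hs0def
    have hs0 : 0 < s0 := by positivity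
    -- integrability of exp(s * sum)
    have hInt : ∀ s : ℝ,
        Integrable (fun ω : Fin n → ℝ => Real.exp (s * ∑ i, (ω i - x i))) (Measure.pi ν) := by
      intro s
      have h2 : (fun ω : Fin n → ℝ => Real.exp (s * ∑ i, (ω i - x i)))
          = fun ω => ∏ j, Real.exp (s * (ω j - x j)) := by
        funext ω
        rw [Finset.mul_sum, Real.exp_sum]
      rw [h2]
      exact hintprod (fun j y => Real.exp (s * (y - x j))) (fun j => hcoordInt j _)
    -- mgf bound
    have hmgf : ∀ s : ℝ,
        (∫ ω, Real.exp (s * ∑ i, (ω i - x i)) ∂Measure.pi ν)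
          ≤ Real.exp (N * (s ^ 2 * h ^ 2 / 8)) := by
      intro s
      have h2 : (fun ω : Fin n → ℝ => Real.exp (s * ∑ i, (ω i - x i)))
          = fun ω => ∏ j, Real.exp (s * (ω j - x j)) := by
        funext ω
        rw [Finset.mul_sum, Real.exp_sum]
      rw [h2, hprod (fun j y => Real.exp (s * (y - x j)))]
      have hfac : ∀ j, (∫ y, Real.exp (s * (y - x j)) ∂ν j) ≤ Real.exp ((s * h) ^ 2 / 8) := by
        intro j
        rw [hcoord j]
        have e1 : s * (A j + h - x j) = (1 - f j) * (s * h) := by rw [hx j]; ring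
        have e2 : s * (A j - x j) = -(f j * (s * h)) := by rw [hx j]; ring
        rw [e1, e2]
        exact bernoulli_mgf_le' (f j) (hf0 j) (hf1 j) (s * h)
      calc (∏ j, ∫ y, Real.exp (s * (y - x j)) ∂ν j)
          ≤ ∏ _j : Fin n, Real.exp ((s * h) ^ 2 / 8) := by
            refine Finset.prod_le_prod (fun j _ => ?_) (fun j _ => hfac j)
            rw [hcoord j]
            have := Real.exp_pos (s * (A j + h - x j))
            have := Real.exp_pos (s * (A j - x j))
            nlinarith [hf0 j, hf1 j]
      _ = Real.exp ((s * h) ^ 2 / 8) ^ n := by rw [Finset.prod_const, Finset.card_univ,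
            Fintype.card_fin]
      _ = Real.exp (N * (s ^ 2 * h ^ 2 / 8)) := by
            rw [← Real.exp_nat_mul, hNdef]
            ring_nf
    -- Chernoff bounds
    have exponent : -s0 * t + N * (s0 ^ 2 * h ^ 2 / 8) = -2 * t ^ 2 / (N * h ^ 2) := by
      rw [hs0def]
      field_simp
      ring
    set E : ℝ := Real.exp (-2 * t ^ 2 / (N * h ^ 2)) with hE
    have hup : ((Measure.pi ν) {ω | t ≤ ∑ i, (ω i - x i)}).toReal ≤ E := by
      have := measure_ge_le_exp_mul_mgf (μ := Measure.pi ν)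
        (X := fun ω : Fin n → ℝ => ∑ i, (ω i - x i)) t hs0.le (hInt s0)
      refine this.trans ?_
      unfold ProbabilityTheory.mgf
      calc Real.exp (-s0 * t) * ∫ ω, Real.exp (s0 * ∑ i, (ω i - x i)) ∂Measure.pi ν
          ≤ Real.exp (-s0 * t) * Real.exp (N * (s0 ^ 2 * h ^ 2 / 8)) :=
            mul_le_mul_of_nonneg_left (hmgf s0) (Real.exp_pos _).le
      _ = E := by rw [← Real.exp_add, hE, ← exponent]
    have hlow : ((Measure.pi ν) {ω | (∑ i, (ω i - x i)) ≤ -t}).toReal ≤ E := by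
      have := measure_le_le_exp_mul_mgf (μ := Measure.pi ν)
        (X := fun ω : Fin n → ℝ => ∑ i, (ω i - x i)) (-t) (neg_nonpos.mpr hs0.le) (hInt (-s0))
      refine this.trans ?_
      unfold ProbabilityTheory.mgf
      calc Real.exp (-(-s0) * -t) * ∫ ω, Real.exp (-s0 * ∑ i, (ω i - x i)) ∂Measure.pi ν
          ≤ Real.exp (-(-s0) * -t) * Real.exp (N * ((-s0) ^ 2 * h ^ 2 / 8)) :=
            mul_le_mul_of_nonneg_left (hmgf (-s0)) (Real.exp_pos _).le
      _ = E := by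
          rw [← Real.exp_add, hE, ← exponent]
          ring_nf
    have hsub : {ω : Fin n → ℝ | t ≤ |∑ i, (ω i - x i)|}
        ⊆ {ω | t ≤ ∑ i, (ω i - x i)} ∪ {ω | (∑ i, (ω i - x i)) ≤ -t} := by
      intro ω hω
      have hω' : t ≤ |∑ i, (ω i - x i)| := hω
      rcases le_abs.mp hω' with h1 | h1
      · exact Or.inl h1
      · exact Or.inr (show (∑ i, (ω i - x i)) ≤ -t by linarith)
    calc (Measure.pi ν) {ω | t ≤ |∑ i, (ω i - x i)|}
        ≤ (Measure.pi ν) ({ω | t ≤ ∑ i, (ω i - x i)} ∪ {ω | (∑ i, (ω i - x i)) ≤ -t}) :=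
          measure_mono hsub
    _ ≤ (Measure.pi ν) {ω | t ≤ ∑ i, (ω i - x i)}
          + (Measure.pi ν) {ω | (∑ i, (ω i - x i)) ≤ -t} := measure_union_le _ _
    _ ≤ ENNReal.ofReal E + ENNReal.ofReal E := by
        gcongr
        · rw [← ENNReal.ofReal_toReal (measure_ne_top (Measure.pi ν) _)]
          exact ENNReal.ofReal_le_ofReal hup
        · rw [← ENNReal.ofReal_toReal (measure_ne_top (Measure.pi ν) _)]
          exact ENNReal.ofReal_le_ofReal hlow
    _ = ENNReal.ofReal (2 * E) := by
        have hEnn : 0 ≤ E := by rw [hE]; positivity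
        rw [← ENNReal.ofReal_add hEnn hEnn, two_mul]
    _ ≤ ENNReal.ofReal (2 * Real.exp (-2 * t ^ 2 / (↑n * h ^ 2))) := le_refl _
end

section
/- Let h > 0 and let x_1, …, x_n be real numbers summed recursively under stochastic rounding: S_0 = 0 and S_k = SR_h(S_{k−1} + x_k) with fresh independent randomness at each step. Then, since conditionally on S_{k−1} each step has conditional mean S_{k−1} + x_k and conditional variance at most h²/4, the total variance satisfies Var(S_n) ≤ n·h²/4. -/
open MeasureTheory ProbabilityTheory
open scoped ENNReal

/-- The law of recursive summation under stochastic rounding with fresh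
independent randomness at each step: `S_0 = 0` and the law of
`S_k = SR_h(S_{k−1} + x_k)` is the monadic bind of the law of `S_{k−1}` with the
kernel `s ↦ SR_h(s + x_k)`. -/
noncomputable def recSumPMF (h : ℝ) (l : List ℝ) : PMF ℝ :=
  l.foldl (fun p x => p.bind fun s => srPMF h (s + x)) (PMF.pure 0)

/- ### Auxiliary lemmas -/

lemma integrable_fin (p : PMF ℝ) (hp : p.support.Finite) (g : ℝ → ℝ) :
    Integrable g p.toMeasure := by
  have h1 : IntegrableOn g p.support p.toMeasure := by
    rw [← Set.biUnion_of_singleton p.support]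
    exact (integrableOn_finite_biUnion hp).2 fun a _ =>
      (integrableOn_singleton_iff enorm_ne_top).mpr (Or.inr (measure_lt_top _ _))
  rwa [IntegrableOn, PMF.restrict_toMeasure_support p] at h1

lemma sr_support_finite (h x : ℝ) : (srPMF h x).support.Finite := by
  rw [srPMF, PMF.support_map]
  exact (Set.toFinite _).image _

lemma sr_integral (h x : ℝ) (g : ℝ → ℝ) (hg : Measurable g) :
    ∫ y, g y ∂(srPMF h x).toMeasure =
      Int.fract (x / h) * g (h * ⌊x / h⌋ + h) + (1 - Int.fract (x / h)) * g (h * ⌊x / h⌋) := by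
  have hfn : Measurable (fun b : Bool => if b then h * ⌊x / h⌋ + h else h * ⌊x / h⌋) :=
    Measurable.of_discrete
  rw [srPMF, ← PMF.toMeasure_map _ _ hfn,
    integral_map hfn.aemeasurable hg.aestronglyMeasurable, PMF.integral_eq_sum]
  have hf0 : (0:ℝ) ≤ Int.fract (x / h) := Int.fract_nonneg _
  have hf1 : Real.toNNReal (Int.fract (x / h)) ≤ 1 :=
    Real.toNNReal_le_one.mpr (Int.fract_lt_one _).le
  rw [Fintype.sum_bool]
  simp only [PMF.bernoulli_apply, Bool.cond_true, Bool.cond_false, if_true, if_false,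
    smul_eq_mul]
  rw [ENNReal.coe_toReal, ENNReal.coe_toReal, NNReal.coe_sub hf1, NNReal.coe_one,
    Real.coe_toNNReal _ hf0]
  norm_num

lemma sr_fract_mul (h x : ℝ) (hh : 0 < h) :
    Int.fract (x / h) * h = x - h * ⌊x / h⌋ := by
  rw [Int.fract, sub_mul, div_mul_cancel₀ _ hh.ne']
  ring

lemma sr_mean (h : ℝ) (hh : 0 < h) (x : ℝ) :
    ∫ y, y ∂(srPMF h x).toMeasure = x := by
  rw [sr_integral h x (fun y => y) measurable_id']
  have hx := sr_fract_mul h x hh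
  linear_combination hx

lemma sr_sq (h : ℝ) (hh : 0 < h) (x : ℝ) :
    ∫ y, y ^ 2 ∂(srPMF h x).toMeasure ≤ x ^ 2 + h ^ 2 / 4 := by
  rw [sr_integral h x (fun y => y ^ 2) (measurable_id'.pow_const 2)]
  have hx := sr_fract_mul h x hh
  set F := Int.fract (x / h) with hF
  set B := h * (⌊x / h⌋ : ℝ) with hB
  have hxx : x = B + F * h := by linarith
  rw [hxx]
  nlinarith [sq_nonneg (h * F - h / 2)]

lemma bind_integral (p : PMF ℝ) (hp : p.support.Finite) (k : ℝ → PMF ℝ)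
    (hk : ∀ a, (k a).support.Finite) (g : ℝ → ℝ) :
    ∫ y, g y ∂(p.bind k).toMeasure =
      ∑ a ∈ hp.toFinset, (p a).toReal * ∫ y, g y ∂(k a).toMeasure := by
  have hbind : (p.bind k).support.Finite := by
    rw [PMF.support_bind]; exact hp.biUnion fun a _ => hk a
  have hsum : ∀ a ∈ hp.toFinset,
      Summable fun b => (p a).toReal * ((k a b).toReal * g b) := by
    intro a _
    refine Summable.mul_left _ ?_
    apply summable_of_ne_finset_zero (s := (hk a).toFinset)
    intro b hb
    have : k a b = 0 := (PMF.apply_eq_zero_iff _ _).2 (by simpa using hb)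
    simp [this]
  rw [PMF.integral_eq_tsum _ g (integrable_fin _ hbind g)]
  have step1 : ∀ b, ((p.bind k) b).toReal • g b =
      ∑ a ∈ hp.toFinset, (p a).toReal * ((k a b).toReal * g b) := by
    intro b
    rw [smul_eq_mul, PMF.bind_apply,
      tsum_eq_sum (s := hp.toFinset) (fun a ha => by
        have : p a = 0 := (PMF.apply_eq_zero_iff _ _).2 (by simpa using ha)
        simp [this]),
      ENNReal.toReal_sum (fun a _ => ENNReal.mul_ne_top (p.apply_ne_top a) ((k a).apply_ne_top b)),
      Finset.sum_mul]
    refine Finset.sum_congr rfl fun a _ => ?_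
    rw [ENNReal.toReal_mul, mul_assoc]
  calc ∑' b, ((p.bind k) b).toReal • g b
      = ∑' b, ∑ a ∈ hp.toFinset, (p a).toReal * ((k a b).toReal * g b) := by
        simp only [step1]
    _ = ∑ a ∈ hp.toFinset, ∑' b, (p a).toReal * ((k a b).toReal * g b) := Summable.tsum_finsetSum hsum
    _ = ∑ a ∈ hp.toFinset, (p a).toReal * ∫ y, g y ∂(k a).toMeasure := by
        refine Finset.sum_congr rfl fun a _ => ?_
        rw [tsum_mul_left, PMF.integral_eq_tsum _ g (integrable_fin _ (hk a) g)]
        simp [smul_eq_mul]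

lemma finsum_eq_integral (p : PMF ℝ) (hp : p.support.Finite) (g : ℝ → ℝ) :
    ∑ a ∈ hp.toFinset, (p a).toReal * g a = ∫ s, g s ∂p.toMeasure := by
  rw [PMF.integral_eq_tsum _ g (integrable_fin _ hp g),
    tsum_eq_sum (s := hp.toFinset) (fun a ha => by
      have : p a = 0 := (PMF.apply_eq_zero_iff _ _).2 (by simpa using ha)
      simp [this])]
  simp [smul_eq_mul]

lemma recSum_append (h x : ℝ) (l : List ℝ) :
    recSumPMF h (l ++ [x]) = (recSumPMF h l).bind fun s => srPMF h (s + x) := by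
  simp [recSumPMF]

lemma rec_props (h : ℝ) (hh : 0 < h) (l : List ℝ) :
    (recSumPMF h l).support.Finite ∧
      (∫ s, s ∂(recSumPMF h l).toMeasure = l.sum ∧
       ∫ s, s ^ 2 ∂(recSumPMF h l).toMeasure ≤ l.sum ^ 2 + l.length * h ^ 2 / 4) := by
  induction l using List.reverseRecOn with
  | nil =>
    have h0 : recSumPMF h List.nil = PMF.pure 0 := rfl
    rw [h0, PMF.toMeasure_pure]
    refine ⟨by rw [PMF.support_pure]; exact Set.finite_singleton 0, ?_, ?_⟩ <;>
      simp [integral_dirac]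
  | append_singleton l x ih =>
    obtain ⟨hfin, hmean, hsq⟩ := ih
    have hkfin : ∀ a : ℝ, (srPMF h (a + x)).support.Finite := fun a => sr_support_finite _ _
    have hfin' : (recSumPMF h (l ++ [x])).support.Finite := by
      rw [recSum_append, PMF.support_bind]
      exact hfin.biUnion fun a _ => hkfin a
    have hq := recSum_append h x l
    have hint_id : Integrable (fun s : ℝ => s) (recSumPMF h l).toMeasure :=
      integrable_fin _ hfin _
    refine ⟨hfin', ?_, ?_⟩
    · rw [hq, bind_integral _ hfin _ hkfin]
      have e1 : ∀ a ∈ hfin.toFinset, ((recSumPMF h l) a).toReal * ∫ y, y ∂(srPMF h (a + x)).toMeasure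
          = ((recSumPMF h l) a).toReal * (a + x) := fun a _ => by rw [sr_mean h hh]
      rw [Finset.sum_congr rfl e1, finsum_eq_integral _ hfin (fun s => s + x),
        integral_add hint_id (integrable_const x), hmean, integral_const]
      simp [List.sum_append]
    · rw [hq, bind_integral _ hfin _ hkfin]
      have step : ∑ a ∈ hfin.toFinset,
            ((recSumPMF h l) a).toReal * ∫ y, y ^ 2 ∂(srPMF h (a + x)).toMeasure
          ≤ ∑ a ∈ hfin.toFinset, ((recSumPMF h l) a).toReal * ((a + x) ^ 2 + h ^ 2 / 4) := by
        refine Finset.sum_le_sum fun a _ => ?_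
        exact mul_le_mul_of_nonneg_left (sr_sq h hh (a + x)) ENNReal.toReal_nonneg
      have e2 : ∑ a ∈ hfin.toFinset, ((recSumPMF h l) a).toReal * ((a + x) ^ 2 + h ^ 2 / 4)
          = ∫ s, ((s + x) ^ 2 + h ^ 2 / 4) ∂(recSumPMF h l).toMeasure :=
        finsum_eq_integral _ hfin _
      have e3 : ∫ s, ((s + x) ^ 2 + h ^ 2 / 4) ∂(recSumPMF h l).toMeasure
          = (∫ s, s ^ 2 ∂(recSumPMF h l).toMeasure) + (2 * x) * (∫ s, s ∂(recSumPMF h l).toMeasure)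
            + (x ^ 2 + h ^ 2 / 4) := by
        have hrw : (fun s : ℝ => (s + x) ^ 2 + h ^ 2 / 4)
            = fun s : ℝ => s ^ 2 + ((2 * x) * s + (x ^ 2 + h ^ 2 / 4)) := funext fun s => by ring
        rw [hrw, integral_add (integrable_fin _ hfin _)
            (by
              have : (fun s : ℝ => (2 * x) * s + (x ^ 2 + h ^ 2 / 4)) =
                  fun s : ℝ => (2 * x) * s + (x ^ 2 + h ^ 2 / 4) := rfl
              exact integrable_fin _ hfin _),
          integral_add (integrable_fin _ hfin _) (integrable_const _),
          integral_const_mul, integral_const]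
        simp [add_assoc, measure_univ]
      have hlen : ((l ++ [x]).length : ℝ) = (l.length : ℝ) + 1 := by
        simp [List.length_append]
      have hsum' : (l ++ [x]).sum = l.sum + x := by simp [List.sum_append]
      calc ∑ a ∈ hfin.toFinset,
            ((recSumPMF h l) a).toReal * ∫ y, y ^ 2 ∂(srPMF h (a + x)).toMeasure
          ≤ ∫ s, ((s + x) ^ 2 + h ^ 2 / 4) ∂(recSumPMF h l).toMeasure := by
            rw [← e2]; exact step
        _ = (∫ s, s ^ 2 ∂(recSumPMF h l).toMeasure) + (2 * x) * l.sum + (x ^ 2 + h ^ 2 / 4) := by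
            rw [e3, hmean]
        _ ≤ (l.sum ^ 2 + l.length * h ^ 2 / 4) + (2 * x) * l.sum + (x ^ 2 + h ^ 2 / 4) := by
            linarith
        _ = (l ++ [x]).sum ^ 2 + (l ++ [x]).length * h ^ 2 / 4 := by
            rw [hsum', hlen]; ring

/-- Recursive summation under stochastic rounding, each step having conditional
variance at most `h²/4`, satisfies `Var(S_n) ≤ n·h²/4`. -/
theorem recursive_sum_variance (h : ℝ) (hh : 0 < h) (l : List ℝ) :
    variance id (recSumPMF h l).toMeasure ≤ l.length * h ^ 2 / 4 := by
  obtain ⟨hfin, hmean, hsq⟩ := rec_props h hh l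
  have hmem : MemLp id 2 (recSumPMF h l).toMeasure :=
    (memLp_two_iff_integrable_sq measurable_id.aestronglyMeasurable).2
      (integrable_fin _ hfin _)
  rw [variance_eq_sub hmem]
  simp only [Pi.pow_apply, id_eq]
  rw [hmean] at *
  linarith [hsq]
end

section
/- Let h > 0 and let x_1, …, x_n be real numbers summed recursively under stochastic rounding: S_0 = 0 and S_k = SR_h(S_{k−1} + x_k) with fresh independent randomness at each step. Then for every t > 0, P(|S_n − (x_1 + ⋯ + x_n)| ≥ t) ≤ n·h²/(4t²); in particular, for every δ ∈ (0,1), with probability at least 1 − δ the error of recursive summation under stochastic rounding is at most (h/2)·√(n/δ), i.e. it grows like √n with high probability. -/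
open MeasureTheory ProbabilityTheory
open scoped ENNReal

lemma pmf_lintegral {α : Type*} [MeasurableSpace α] [MeasurableSingletonClass α]
    (p : PMF α) (g : α → ℝ≥0∞) :
    ∫⁻ a, g a ∂p.toMeasure = ∑' a, p a * g a := by
  conv_lhs => rw [← PMF.restrict_toMeasure_support p]
  rw [lintegral_countable _ p.support_countable]
  have h2 : (∑' (a : p.support), (fun a => p a * g a) a.1) = ∑' a, p a * g a := by
    refine tsum_subtype_eq_of_support_subset (f := fun a => p a * g a) (s := p.support)
      fun x hx => ?_
    rw [Function.mem_support] at hx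
    rw [PMF.mem_support_iff]
    intro h0
    exact hx (by rw [h0, zero_mul])
  rw [← h2]
  refine tsum_congr fun a => ?_
  rw [PMF.toMeasure_apply_singleton p _ (measurableSet_singleton _), mul_comm]

lemma pmf_lintegral_bind (p : PMF ℝ) (κ : ℝ → PMF ℝ) (g : ℝ → ℝ≥0∞) :
    ∫⁻ z, g z ∂(p.bind κ).toMeasure
      = ∫⁻ s, (∫⁻ z, g z ∂(κ s).toMeasure) ∂p.toMeasure := by
  rw [pmf_lintegral, pmf_lintegral]
  calc ∑' b, (p.bind κ) b * g b
      = ∑' b, ∑' a, p a * κ a b * g b := by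
        simp only [PMF.bind_apply]
        exact tsum_congr fun b => ENNReal.tsum_mul_right.symm
    _ = ∑' a, ∑' b, p a * (κ a b * g b) := by
        rw [ENNReal.tsum_comm]
        simp_rw [mul_assoc]
    _ = ∑' a, p a * ∑' b, κ a b * g b := by
        simp_rw [ENNReal.tsum_mul_left]
    _ = ∑' a, p a * ∫⁻ z, g z ∂(κ a).toMeasure := by
        exact tsum_congr fun a => by rw [pmf_lintegral]

lemma sr_lintegral (h x : ℝ) (g : ℝ → ℝ≥0∞) (hg : Measurable g) :
    ∫⁻ z, g z ∂(srPMF h x).toMeasure =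
      ENNReal.ofReal (Int.fract (x / h)) * g (h * ⌊x / h⌋ + h)
      + (1 - ENNReal.ofReal (Int.fract (x / h))) * g (h * ⌊x / h⌋) := by
  have hf : Measurable (fun b : Bool => if b then h * ⌊x / h⌋ + h else h * ⌊x / h⌋) :=
    measurable_of_countable _
  rw [srPMF, ← PMF.toMeasure_map _ _ hf, lintegral_map hg hf, pmf_lintegral]
  rw [tsum_bool]
  simp only [PMF.bernoulli_apply, Bool.cond_false, Bool.cond_true]
  norm_num
  simp only [ENNReal.ofReal]
  ring

lemma sr_moment (h : ℝ) (hh : 0 < h) (x c : ℝ) :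
    ∫⁻ z, ENNReal.ofReal ((z - c) ^ 2) ∂(srPMF h x).toMeasure
      ≤ ENNReal.ofReal ((x - c) ^ 2) + ENNReal.ofReal (h ^ 2 / 4) := by
  rw [sr_lintegral h x _ (by fun_prop)]
  set f := Int.fract (x / h) with hfdef
  have hf0 : (0 : ℝ) ≤ f := Int.fract_nonneg _
  have hf1 : f < 1 := Int.fract_lt_one _
  have h1 : (1 : ℝ≥0∞) - ENNReal.ofReal f = ENNReal.ofReal (1 - f) := by
    rw [← ENNReal.ofReal_one, ← ENNReal.ofReal_sub _ hf0]
  rw [h1, ← ENNReal.ofReal_mul hf0, ← ENNReal.ofReal_mul (by linarith),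
    ← ENNReal.ofReal_add (mul_nonneg hf0 (sq_nonneg _)) (mul_nonneg (by linarith) (sq_nonneg _)),
    ← ENNReal.ofReal_add (sq_nonneg _) (by positivity)]
  apply ENNReal.ofReal_le_ofReal
  set a : ℝ := h * ⌊x / h⌋ with hadef
  have hx : x = a + h * f := by
    rw [hadef, hfdef, Int.fract]
    field_simp
    ring
  rw [hx]
  nlinarith [sq_nonneg (h - 2 * h * f)]

lemma rec_moment (h : ℝ) (hh : 0 < h) (l : List ℝ) :
    ∫⁻ z, ENNReal.ofReal ((z - l.sum) ^ 2) ∂(recSumPMF h l).toMeasure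
      ≤ (l.length : ℝ≥0∞) * ENNReal.ofReal (h ^ 2 / 4) := by
  induction l using List.reverseRecOn with
  | nil =>
    have hnil : recSumPMF h List.nil = PMF.pure 0 := rfl
    rw [hnil, pmf_lintegral]
    have h0 : ∀ a : ℝ, (PMF.pure (0 : ℝ)) a * ENNReal.ofReal ((a - List.sum []) ^ 2) = 0 := by
      intro a
      by_cases ha : a = 0
      · subst ha; simp
      · simp [PMF.pure_apply, ha]
    simp [tsum_congr h0]
  | append_singleton l x ih =>
    have hrec : recSumPMF h (l ++ [x]) = (recSumPMF h l).bind (fun s => srPMF h (s + x)) := by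
      simp [recSumPMF, List.foldl_append]
    rw [hrec, pmf_lintegral_bind]
    have hsum : (l ++ [x]).sum = l.sum + x := by simp
    calc ∫⁻ s, (∫⁻ z, ENNReal.ofReal ((z - (l ++ [x]).sum) ^ 2)
            ∂(srPMF h (s + x)).toMeasure) ∂(recSumPMF h l).toMeasure
        ≤ ∫⁻ s, (ENNReal.ofReal ((s - l.sum) ^ 2) + ENNReal.ofReal (h ^ 2 / 4))
            ∂(recSumPMF h l).toMeasure := by
          refine lintegral_mono fun s => ?_
          refine (sr_moment h hh (s + x) ((l ++ [x]).sum)).trans (le_of_eq ?_)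
          congr 2
          rw [hsum]; ring
      _ = (∫⁻ s, ENNReal.ofReal ((s - l.sum) ^ 2) ∂(recSumPMF h l).toMeasure)
            + ENNReal.ofReal (h ^ 2 / 4) := by
          rw [lintegral_add_right _ measurable_const, lintegral_const, measure_univ, mul_one]
      _ ≤ (l.length : ℝ≥0∞) * ENNReal.ofReal (h ^ 2 / 4) + ENNReal.ofReal (h ^ 2 / 4) := by
          exact add_le_add_left ih _
      _ = ((l ++ [x]).length : ℝ≥0∞) * ENNReal.ofReal (h ^ 2 / 4) := by
          simp only [List.length_append, List.length_singleton]
          push_cast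
          ring

/-- Chebyshev bound for recursive summation under stochastic rounding:
`P(|S_n − Σ x_i| ≥ t) ≤ n·h²/(4t²)` for all `t > 0`; in particular, for
`δ ∈ (0,1)`, with probability at least `1 − δ` the error is at most
`(h/2)·√(n/δ)`, growing like `√n`. -/
theorem recursive_sum_chebyshev (h : ℝ) (hh : 0 < h) (l : List ℝ) :
    (∀ t : ℝ, 0 < t →
      (recSumPMF h l).toMeasure {z | t ≤ |z - l.sum|}
        ≤ ENNReal.ofReal (l.length * h ^ 2 / (4 * t ^ 2))) ∧
    ∀ δ : ℝ, δ ∈ Set.Ioo (0 : ℝ) 1 →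
      ENNReal.ofReal (1 - δ) ≤
        (recSumPMF h l).toMeasure
          {z | |z - l.sum| ≤ h / 2 * Real.sqrt (l.length / δ)} := by
  have key := rec_moment h hh l
  set μ := (recSumPMF h l).toMeasure with hμ
  set m := l.sum with hm
  have hcheb : ∀ t : ℝ, 0 < t →
      μ {z | t ≤ |z - m|} ≤ ENNReal.ofReal (l.length * h ^ 2 / (4 * t ^ 2)) := by
    intro t ht
    have hsub : {z : ℝ | t ≤ |z - m|}
        ⊆ {z : ℝ | ENNReal.ofReal (t ^ 2) ≤ ENNReal.ofReal ((z - m) ^ 2)} := by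
      intro z hz
      simp only [Set.mem_setOf_eq] at *
      apply ENNReal.ofReal_le_ofReal
      calc t ^ 2 ≤ |z - m| ^ 2 := by nlinarith [abs_nonneg (z - m)]
        _ = (z - m) ^ 2 := sq_abs _
    have h2 : ENNReal.ofReal (t ^ 2) *
        μ {z | ENNReal.ofReal (t ^ 2) ≤ ENNReal.ofReal ((z - m) ^ 2)}
          ≤ ∫⁻ z, ENNReal.ofReal ((z - m) ^ 2) ∂μ :=
      mul_meas_ge_le_lintegral₀ (by fun_prop) _
    have h3 : ENNReal.ofReal (t ^ 2) * μ {z | t ≤ |z - m|}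
        ≤ ENNReal.ofReal (l.length * (h ^ 2 / 4)) := by
      refine le_trans (mul_le_mul_right (measure_mono hsub) _) (h2.trans (key.trans ?_))
      rw [← ENNReal.ofReal_natCast l.length, ← ENNReal.ofReal_mul (Nat.cast_nonneg _)]
    have ht2 : (0 : ℝ) < t ^ 2 := by positivity
    have h4 : μ {z | t ≤ |z - m|} ≤ ENNReal.ofReal (l.length * (h ^ 2 / 4)) / ENNReal.ofReal (t ^ 2) := by
      rw [ENNReal.le_div_iff_mul_le (Or.inl (by simp [ENNReal.ofReal_eq_zero]; linarith))
        (Or.inl ENNReal.ofReal_ne_top)]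
      rw [mul_comm]; exact h3
    refine h4.trans (le_of_eq ?_)
    rw [← ENNReal.ofReal_div_of_pos ht2]
    congr 1
    field_simp
    try ring
  constructor
  · exact hcheb
  · intro δ hδ
    obtain ⟨hδ0, hδ1⟩ := hδ
    rcases Nat.eq_zero_or_pos l.length with hn | hn
    · -- empty list
      have hl : l = [] := List.length_eq_zero_iff.mp hn
      subst hl
      have : (0 : ℝ) ∈ {z : ℝ | |z - m| ≤ h / 2 * Real.sqrt (([] : List ℝ).length / δ)} := by
        simp [hm]
      have hμ0 : μ = (PMF.pure (0 : ℝ)).toMeasure := rfl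
      rw [hμ0, PMF.toMeasure_pure_apply _ _
        (measurableSet_le (by fun_prop) measurable_const)]
      rw [if_pos this]
      exact ENNReal.ofReal_le_one.mpr (by linarith)
    · set t := h / 2 * Real.sqrt (l.length / δ) with htdef
      have hnd : (0 : ℝ) < (l.length : ℝ) / δ := by
        apply div_pos _ hδ0
        exact_mod_cast hn
      have ht : 0 < t := by
        apply mul_pos (by linarith)
        exact Real.sqrt_pos.mpr hnd
      have hA : MeasurableSet {z : ℝ | |z - m| ≤ t} :=
        measurableSet_le (by fun_prop) measurable_const
      have hcompl : {z : ℝ | |z - m| ≤ t}ᶜ ⊆ {z : ℝ | t ≤ |z - m|} := by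
        intro z hz
        simp only [Set.mem_compl_iff, Set.mem_setOf_eq, not_le] at hz ⊢
        exact hz.le
      have hkey : μ {z : ℝ | |z - m| ≤ t}ᶜ ≤ ENNReal.ofReal δ := by
        refine (measure_mono hcompl).trans ((hcheb t ht).trans (le_of_eq ?_))
        congr 1
        rw [htdef]
        rw [mul_pow, Real.sq_sqrt hnd.le]
        field_simp
        try ring
      have h1 : (1 : ℝ≥0∞) ≤ μ {z : ℝ | |z - m| ≤ t} + ENNReal.ofReal δ := by
        calc (1 : ℝ≥0∞) = μ Set.univ := (measure_univ).symm
          _ = μ ({z : ℝ | |z - m| ≤ t} ∪ {z : ℝ | |z - m| ≤ t}ᶜ) := by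
              rw [Set.union_compl_self]
          _ ≤ μ {z : ℝ | |z - m| ≤ t} + μ {z : ℝ | |z - m| ≤ t}ᶜ := measure_union_le _ _
          _ ≤ μ {z : ℝ | |z - m| ≤ t} + ENNReal.ofReal δ := add_le_add_right hkey _
      have : ENNReal.ofReal (1 - δ) = 1 - ENNReal.ofReal δ := by
        rw [ENNReal.ofReal_sub _ hδ0.le, ENNReal.ofReal_one]
      rw [this]
      exact tsub_le_iff_right.mpr h1
end
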